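/- There exists δ₀ with 0 < δ₀ < π/4 such that for every δ ∈ (0, δ₀) and every t ∈ [δ, π/2 − δ], the function ε₀(t) = (t − δ)³ · (12(π − 3δ − t)·cos δ − (π − 4δ)(2π − 5δ − 3t)·sin δ) / (3(π − 4δ)³) satisfies 0 ≤ deriv ε₀ t ≤ Real.sin t. -/

import Mathlib

set_option maxHeartbeats 1000000
open Real

lemma nonneg_of_hasDerivAt (f f' : ℝ → ℝ) (hd : ∀ x, HasDerivAt f (f' x) x)
    (h0 : f 0 = 0) (hf' : ∀ x, 0 ≤ x → 0 ≤ f' x) : ∀ x, 0 ≤ x → 0 ≤ f x := by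
  intro x hx
  have hm : MonotoneOn f (Set.Ici 0) := by
    apply monotoneOn_of_deriv_nonneg (convex_Ici 0)
    · exact fun y _ => (hd y).continuousAt.continuousWithinAt
    · exact fun y _ => (hd y).differentiableAt.differentiableWithinAt
    · intro y hy
      rw [(hd y).deriv]
      exact hf' y (le_of_lt (by simpa [interior_Ici] using hy))
  have := hm Set.self_mem_Ici hx hx
  rwa [h0] at this

lemma sin_lb (x : ℝ) (hx : 0 ≤ x) : x - x ^ 3 / 6 ≤ Real.sin x := by
  have := nonneg_of_hasDerivAt (fun x => Real.sin x - x + x ^ 3 / 6)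
    (fun x => Real.cos x - 1 + x ^ 2 / 2) ?_ (by norm_num) ?_ x hx
  · linarith
  · intro y
    have h3 := (hasDerivAt_pow 3 y).div_const 6
    refine (((Real.hasDerivAt_sin y).sub (hasDerivAt_id y)).add h3).congr_deriv ?_
    ring
  · intro y _
    have := Real.one_sub_sq_div_two_le_cos (x := y)
    linarith

lemma cos_ub (x : ℝ) (hx : 0 ≤ x) : Real.cos x ≤ 1 - x ^ 2 / 2 + x ^ 4 / 24 := by
  have := nonneg_of_hasDerivAt (fun x => 1 - x ^ 2 / 2 + x ^ 4 / 24 - Real.cos x)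
    (fun x => -x + x ^ 3 / 6 + Real.sin x) ?_ (by norm_num) ?_ x hx
  · linarith
  · intro y
    have h2 := (hasDerivAt_pow 2 y).div_const 2
    have h4 := (hasDerivAt_pow 4 y).div_const 24
    refine ((((hasDerivAt_const y (1:ℝ)).sub h2).add h4).sub (Real.hasDerivAt_cos y)).congr_deriv ?_
    ring
  · intro y hy
    have := sin_lb y hy
    linarith

lemma sin_ub (x : ℝ) (hx : 0 ≤ x) : Real.sin x ≤ x - x ^ 3 / 6 + x ^ 5 / 120 := by
  have := nonneg_of_hasDerivAt (fun x => x - x ^ 3 / 6 + x ^ 5 / 120 - Real.sin x)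
    (fun x => 1 - x ^ 2 / 2 + x ^ 4 / 24 - Real.cos x) ?_ (by norm_num) ?_ x hx
  · linarith
  · intro y
    have h3 := (hasDerivAt_pow 3 y).div_const 6
    have h5 := (hasDerivAt_pow 5 y).div_const 120
    refine ((((hasDerivAt_id y).sub h3).add h5).sub (Real.hasDerivAt_sin y)).congr_deriv ?_
    ring
  · intro y hy
    have := cos_ub y hy
    linarith


/-- The explicit polynomial middle piece of the profile-modification function. -/
noncomputable def eps0 (δ t : ℝ) : ℝ :=
  (t - δ) ^ 3 *
    (12 * (π - 3 * δ - t) * Real.cos δ - (π - 4 * δ) * (2 * π - 5 * δ - 3 * t) * Real.sin δ) /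
    (3 * (π - 4 * δ) ^ 3)

noncomputable def Q (δ t : ℝ) : ℝ :=
  12 * Real.cos δ * (3 * π - 8 * δ - 4 * t) - 6 * (π - 4 * δ) * (π - 2 * δ - 2 * t) * Real.sin δ

noncomputable def Qd (δ : ℝ) : ℝ := -48 * Real.cos δ + 12 * (π - 4 * δ) * Real.sin δ

noncomputable def E (δ t : ℝ) : ℝ := (t - δ) ^ 2 * Q δ t / (3 * (π - 4 * δ) ^ 3)

noncomputable def E1 (δ t : ℝ) : ℝ :=
  (2 * (t - δ) * Q δ t + (t - δ) ^ 2 * Qd δ) / (3 * (π - 4 * δ) ^ 3)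

noncomputable def E2 (δ t : ℝ) : ℝ :=
  (2 * Q δ t + 4 * (t - δ) * Qd δ) / (3 * (π - 4 * δ) ^ 3)

lemma hasDerivAt_Q (δ t : ℝ) : HasDerivAt (Q δ) (Qd δ) t := by
  unfold Q Qd
  have h1 : HasDerivAt (fun t : ℝ => 3 * π - 8 * δ - 4 * t) (-4) t := by
    simpa using ((hasDerivAt_id t).const_mul 4).const_sub (3 * π - 8 * δ)
  have h2 : HasDerivAt (fun t : ℝ => π - 2 * δ - 2 * t) (-2) t := by
    simpa using ((hasDerivAt_id t).const_mul 2).const_sub (π - 2 * δ)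
  have := ((h1.const_mul (12 * Real.cos δ)).sub
    (((h2.const_mul (6 * (π - 4 * δ))).mul_const (Real.sin δ))))
  refine this.congr_deriv ?_
  ring

lemma hasDerivAt_sub_pow (δ t : ℝ) (n : ℕ) :
    HasDerivAt (fun t : ℝ => (t - δ) ^ n) (n * (t - δ) ^ (n - 1)) t := by
  have := (hasDerivAt_pow n (t - δ)).comp t ((hasDerivAt_id t).sub_const δ)
  simpa [Function.comp_def] using this

lemma hasDerivAt_eps0 (δ t : ℝ) : HasDerivAt (eps0 δ) (E δ t) t := by
  have hP : HasDerivAt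
      (fun t => 12 * (π - 3 * δ - t) * Real.cos δ -
        (π - 4 * δ) * (2 * π - 5 * δ - 3 * t) * Real.sin δ)
      (-12 * Real.cos δ + 3 * (π - 4 * δ) * Real.sin δ) t := by
    have h1 : HasDerivAt (fun t : ℝ => 12 * (π - 3 * δ - t)) (-12) t := by
      simpa using ((hasDerivAt_id t).const_sub (π - 3 * δ)).const_mul 12
    have h2 : HasDerivAt (fun t : ℝ => (π - 4 * δ) * (2 * π - 5 * δ - 3 * t))
        ((π - 4 * δ) * (-3)) t := by
      simpa using (((hasDerivAt_id t).const_mul 3).const_sub (2 * π - 5 * δ)).const_mul (π - 4 * δ)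
    have := (h1.mul_const (Real.cos δ)).sub (h2.mul_const (Real.sin δ))
    refine this.congr_deriv ?_
    ring
  have h3 := ((hasDerivAt_sub_pow δ t 3).mul hP).div_const (3 * (π - 4 * δ) ^ 3)
  unfold eps0
  refine h3.congr_deriv ?_
  unfold E Q
  congr 1
  push_cast
  ring

lemma hasDerivAt_E (δ t : ℝ) : HasDerivAt (E δ) (E1 δ t) t := by
  have := ((hasDerivAt_sub_pow δ t 2).mul (hasDerivAt_Q δ t)).div_const (3 * (π - 4 * δ) ^ 3)
  unfold E E1
  refine this.congr_deriv ?_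
  congr 1
  push_cast
  ring

lemma hasDerivAt_E1 (δ t : ℝ) : HasDerivAt (E1 δ) (E2 δ t) t := by
  have h1 := (((hasDerivAt_id t).sub_const δ).const_mul 2).mul (hasDerivAt_Q δ t)
  have h2 := (hasDerivAt_sub_pow δ t 2).mul_const (Qd δ)
  have := (h1.add h2).div_const (3 * (π - 4 * δ) ^ 3)
  unfold E1 E2
  refine this.congr_deriv ?_
  simp only [id_eq]
  push_cast
  ring

lemma Q_nonneg (δ t : ℝ) (hδ0 : 0 < δ) (hδ1 : δ < 1/1000)
    (ht1 : δ ≤ t) (ht2 : t ≤ π/2 - δ) : 0 ≤ Q δ t := by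
  have hπl : 3.141592 < π := pi_gt_d6
  have hπu : π < 3.141593 := pi_lt_d6
  have hs0 : 0 ≤ Real.sin δ := Real.sin_nonneg_of_nonneg_of_le_pi hδ0.le (by linarith)
  have hs1 : Real.sin δ ≤ δ := Real.sin_le hδ0.le
  have hc1 : Real.cos δ ≤ 1 := Real.cos_le_one δ
  have hc0 : 1 - δ^2/2 ≤ Real.cos δ := Real.one_sub_sq_div_two_le_cos
  unfold Q
  nlinarith [mul_nonneg hs0 (by linarith : (0:ℝ) ≤ π - 2*δ - 2*t),
    mul_nonneg (mul_nonneg hs0 (by linarith : (0:ℝ) ≤ π - 4*δ)) (by linarith : (0:ℝ) ≤ π - 2*δ - 2*t),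
    sq_nonneg δ]

lemma caseA (δ t : ℝ) (hδ0 : 0 < δ) (hδ1 : δ < 1/1000)
    (ht1 : δ ≤ t) (ht2 : t ≤ 11/10) :
    (t - δ)^2 * Q δ t ≤ (t - t^3/6) * (3*(π - 4*δ)^3) := by
  have hπl : 3.141592 < π := pi_gt_d6
  have hπu : π < 3.141593 := pi_lt_d6
  have hs0 : 0 ≤ Real.sin δ := Real.sin_nonneg_of_nonneg_of_le_pi hδ0.le (by linarith)
  have hc1 : Real.cos δ ≤ 1 := Real.cos_le_one δ
  have ht0 : 0 < t := lt_of_lt_of_le hδ0 ht1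
  have hfac : (0:ℝ) ≤ 3*π - 8*δ - 4*t := by linarith
  have hQub : Q δ t ≤ 12*(3*π - 8*δ - 4*t) := by
    unfold Q
    nlinarith [mul_nonneg hs0 (mul_nonneg (by linarith : (0:ℝ) ≤ π - 4*δ) (by linarith : (0:ℝ) ≤ π - 2*δ - 2*t))]
  have h1 : (t - δ)^2 * Q δ t ≤ t^2 * (12*(3*π - 4*t)) := by
    have e1 : (t - δ)^2 * Q δ t ≤ (t - δ)^2 * (12*(3*π - 8*δ - 4*t)) :=
      mul_le_mul_of_nonneg_left hQub (sq_nonneg _)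
    have e2 : (t - δ)^2 ≤ t^2 := by nlinarith
    nlinarith [e2, hfac, sq_nonneg (t - δ)]
  have hA3 : (30:ℝ) ≤ (π - 4*δ)^3 := by
    have hA : (3.137:ℝ) ≤ π - 4*δ := by linarith
    have := pow_le_pow_left₀ (by norm_num : (0:ℝ) ≤ 3.137) hA 3
    norm_num at this
    linarith
  have hpos : (0:ℝ) ≤ t - t^3/6 := by nlinarith
  have h2 : t^2 * (12*(3*π - 4*t)) ≤ (t - t^3/6) * 90 := by
    nlinarith [sq_nonneg (t - 1), mul_nonneg ht0.le (mul_nonneg ht0.le (by linarith : (0:ℝ) ≤ 11/10 - t)), mul_nonneg ht0.le ht0.le]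
  calc (t - δ)^2 * Q δ t ≤ (t - t^3/6) * 90 := le_trans h1 h2
    _ ≤ (t - t^3/6) * (3*(π - 4*δ)^3) :=
      mul_le_mul_of_nonneg_left (by linarith) hpos

lemma caseB (δ x : ℝ) (hδ0 : 0 < δ) (hδ1 : δ < 1/1000)
    (hx1 : 11/10 ≤ x) (hx2 : x ≤ π/2 - δ) :
    3*(π - 4*δ)^3 * (x - x^3/6 + x^5/120) ≤ -(2*Q δ x + 4*(x - δ)*Qd δ) := by
  have hπl : 3.141592 < π := pi_gt_d6
  have hπu : π < 3.141593 := pi_lt_d6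
  have hs0 : 0 ≤ Real.sin δ := Real.sin_nonneg_of_nonneg_of_le_pi hδ0.le (by linarith)
  have hs1 : Real.sin δ ≤ δ := Real.sin_le hδ0.le
  have hc1 : Real.cos δ ≤ 1 := Real.cos_le_one δ
  have hc0 : 1 - δ^2/2 ≤ Real.cos δ := Real.one_sub_sq_div_two_le_cos
  have hx3 : x ≤ 15708/10000 := by linarith
  have hx0 : (0:ℝ) ≤ x := by linarith
  have hxsq : x^2 ≤ 2468/1000 := by nlinarith
  have hp : 0 ≤ x - x^3/6 + x^5/120 := by
    nlinarith [mul_nonneg hx0 (sq_nonneg (x^2 - 10))]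
  have hA3 : 3*(π - 4*δ)^3 ≤ 3*π^3 := by
    have h := pow_le_pow_left₀ (by linarith : (0:ℝ) ≤ π - 4*δ) (by linarith : π - 4*δ ≤ π) 3
    linarith
  have hL : 3*(π - 4*δ)^3 * (x - x^3/6 + x^5/120) ≤ 3*π^3 * (x - x^3/6 + x^5/120) :=
    mul_le_mul_of_nonneg_right hA3 hp
  have hid : -(2*Q δ x + 4*(x - δ)*Qd δ) =
      72*Real.cos δ*(4*x - π) + 12*(π - 4*δ)*Real.sin δ*(π + 2*δ - 6*x) := by
    unfold Q Qd; ring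
  have hδ2 : δ^2 ≤ 1/1000000 := by nlinarith
  have e1 : (π - 4*δ) * Real.sin δ ≤ 3.1416*δ :=
    mul_le_mul (by linarith) hs1 hs0 (by norm_num)
  have e2 : (π - 4*δ) * Real.sin δ * (6*x - π - 2*δ) ≤ 3.1416*δ*(63/10) := by
    have h6 : (0:ℝ) ≤ 6*x - π - 2*δ := by linarith
    have h6' : 6*x - π - 2*δ ≤ 63/10 := by linarith
    calc (π - 4*δ) * Real.sin δ * (6*x - π - 2*δ) ≤ 3.1416*δ*(6*x - π - 2*δ) :=
          mul_le_mul_of_nonneg_right e1 h6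
      _ ≤ 3.1416*δ*(63/10) := by nlinarith
  have e3 : (1 - Real.cos δ)*(4*x - π) ≤ (δ^2/2)*(3.1416) := by
    have h4 : (0:ℝ) ≤ 4*x - π := by linarith
    nlinarith
  have hR : 72*(4*x - π) - 3/10 ≤ -(2*Q δ x + 4*(x - δ)*Qd δ) := by
    rw [hid]
    linarith [e2, e3, hδ2, hδ1]
  have hc3 : (1331/1000:ℝ) ≤ x^3 := by
    have := pow_le_pow_left₀ (by norm_num : (0:ℝ) ≤ 11/10) hx1 3
    norm_num at this; linarith
  have h5 : x^5 ≤ (6091024/1000000) * x := by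
    nlinarith [mul_nonneg (mul_nonneg hx0 (by linarith : (0:ℝ) ≤ 2468/1000 - x^2))
      (by positivity : (0:ℝ) ≤ x^2 + 2468/1000)]
  have hπ3 : 3*π^3 ≤ 93019/1000 := by
    have := pow_le_pow_left₀ (by linarith : (0:ℝ) ≤ π) (le_of_lt hπu) 3
    norm_num at this; linarith
  have hfin : 3*π^3 * (x - x^3/6 + x^5/120) ≤ 72*(4*x - π) - 3/10 := by
    nlinarith [mul_nonneg (by linarith : (0:ℝ) ≤ 93019/1000 - 3*π^3) hp, hc3, h5, hx1]
  linarith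

/-- For all sufficiently small `δ > 0`, the derivative of `ε₀` satisfies
`0 ≤ ε₀' t ≤ sin t` on `[δ, π/2 - δ]`. -/
theorem stmt_12 :
    ∃ δ₀ : ℝ, 0 < δ₀ ∧ δ₀ < π / 4 ∧
      ∀ δ ∈ Set.Ioo (0 : ℝ) δ₀, ∀ t ∈ Set.Icc δ (π / 2 - δ),
        0 ≤ deriv (eps0 δ) t ∧ deriv (eps0 δ) t ≤ Real.sin t := by
  have hπl : 3.141592 < π := pi_gt_d6
  refine ⟨1/1000, by norm_num, by linarith, ?_⟩
  rintro δ ⟨hδ0, hδ1⟩ t ⟨ht1, ht2⟩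
  have hA0 : (0:ℝ) < π - 4*δ := by linarith
  have hA3 : (0:ℝ) < 3*(π - 4*δ)^3 := by positivity
  rw [(hasDerivAt_eps0 δ t).deriv]
  constructor
  · exact div_nonneg (mul_nonneg (sq_nonneg _) (Q_nonneg δ t hδ0 hδ1 ht1 ht2)) hA3.le
  · by_cases hc : t ≤ 11/10
    · have h := caseA δ t hδ0 hδ1 ht1 hc
      have hsl := sin_lb t (le_trans hδ0.le ht1)
      unfold E
      rw [div_le_iff₀ hA3]
      nlinarith [mul_le_mul_of_nonneg_right hsl hA3.le]
    · push_neg at hc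
      set b := π/2 - δ with hb
      have hb1 : (11:ℝ)/10 ≤ b := by rw [hb]; linarith
      have hmemt : t ∈ Set.Icc (11/10 : ℝ) b := ⟨hc.le, ht2⟩
      have hmemb : b ∈ Set.Icc (11/10 : ℝ) b := ⟨hb1, le_refl b⟩
      have key1 : E δ b = Real.sin b := by
        rw [hb, Real.sin_pi_div_two_sub]
        unfold E Q
        rw [div_eq_iff hA3.ne']
        ring
      have key2 : E1 δ b = Real.cos b := by
        rw [hb, Real.cos_pi_div_two_sub]
        unfold E1 Q Qd
        rw [div_eq_iff hA3.ne']
        ring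
      have hg1mono : MonotoneOn (fun y => Real.cos y - E1 δ y) (Set.Icc (11/10 : ℝ) b) := by
        apply monotoneOn_of_deriv_nonneg (convex_Icc _ _)
        · exact fun y _ =>
            ((Real.hasDerivAt_cos y).sub (hasDerivAt_E1 δ y)).continuousAt.continuousWithinAt
        · exact fun y _ =>
            ((Real.hasDerivAt_cos y).sub (hasDerivAt_E1 δ y)).differentiableAt.differentiableWithinAt
        · intro y hy
          rw [interior_Icc] at hy
          rw [HasDerivAt.deriv (f := fun y => Real.cos y - E1 δ y) ((Real.hasDerivAt_cos y).sub (hasDerivAt_E1 δ y))]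
          have hyb := caseB δ y hδ0 hδ1 hy.1.le hy.2.le
          have hsu := sin_ub y (by linarith [hy.1])
          have hE2 : E2 δ y ≤ -Real.sin y := by
            unfold E2
            rw [div_le_iff₀ hA3]
            nlinarith [mul_le_mul_of_nonneg_right hsu hA3.le]
          linarith
      have hg1 : Real.cos t - E1 δ t ≤ 0 := by
        have h2 : Real.cos t - E1 δ t ≤ Real.cos b - E1 δ b := hg1mono hmemt hmemb ht2
        rw [key2] at h2
        linarith
      have hganti : AntitoneOn (fun y => Real.sin y - E δ y) (Set.Icc (11/10 : ℝ) b) := by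
        apply antitoneOn_of_deriv_nonpos (convex_Icc _ _)
        · exact fun y _ =>
            ((Real.hasDerivAt_sin y).sub (hasDerivAt_E δ y)).continuousAt.continuousWithinAt
        · exact fun y _ =>
            ((Real.hasDerivAt_sin y).sub (hasDerivAt_E δ y)).differentiableAt.differentiableWithinAt
        · intro y hy
          rw [interior_Icc] at hy
          rw [HasDerivAt.deriv (f := fun y => Real.sin y - E δ y) ((Real.hasDerivAt_sin y).sub (hasDerivAt_E δ y))]
          have h2 : Real.cos y - E1 δ y ≤ Real.cos b - E1 δ b :=
            hg1mono ⟨hy.1.le, hy.2.le⟩ hmemb hy.2.le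
          rw [key2] at h2
          linarith
      have h2 : Real.sin b - E δ b ≤ Real.sin t - E δ t := hganti hmemt hmemb ht2
      rw [key1] at h2
      linarith
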